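/- In every single-item first-price auction with valuations v_1, …, v_n ≥ 0 and any tie-breaking rule, every mixed Nash equilibrium B is fully efficient: E_{b∼B}[SW(b)] = max_i v_i. That is, the price of anarchy of mixed Nash equilibria in single-item first-price auctions is 1. -/

import Mathlib

open MeasureTheory

set_option maxHeartbeats 1000000

namespace Stmt6

set_option linter.unusedSectionVars false
set_option linter.unusedVariables false

variable {n : ℕ}

def Eset (i : Fin n) (x : ℝ) : Set (Fin n → ℝ) := {b | ∀ k, k ≠ i → b k ≤ x}
def Lset (i : Fin n) (x : ℝ) : Set (Fin n → ℝ) := {b | ∀ k, k ≠ i → b k < x}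

lemma meas_Eset (i : Fin n) (x : ℝ) : MeasurableSet (Eset (n := n) i x) := by
  have : Eset i x = ⋂ k, ⋂ (_ : k ≠ i), {b : Fin n → ℝ | b k ≤ x} := by
    ext b; simp [Eset]
  rw [this]
  exact MeasurableSet.iInter fun k => MeasurableSet.iInter fun _ =>
    measurableSet_le (measurable_pi_apply k) measurable_const

lemma meas_Lset (i : Fin n) (x : ℝ) : MeasurableSet (Lset (n := n) i x) := by
  have : Lset i x = ⋂ k, ⋂ (_ : k ≠ i), {b : Fin n → ℝ | b k < x} := by
    ext b; simp [Lset]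
  rw [this]
  exact MeasurableSet.iInter fun k => MeasurableSet.iInter fun _ =>
    measurableSet_lt (measurable_pi_apply k) measurable_const


section
variable {n : ℕ} (B : Fin n → Measure ℝ) [∀ i, IsProbabilityMeasure (B i)]

lemma meas_upd (i : Fin n) :
    Measurable (fun p : ℝ × (Fin n → ℝ) => Function.update p.2 i p.1) := by
  apply measurable_pi_lambda
  intro k
  by_cases h : k = i
  · subst h
    simpa [Function.update_apply] using (measurable_fst : Measurable (fun p : ℝ × (Fin n → ℝ) => p.1))
  · simpa [Function.update_apply, h] using (show Measurable (fun p : ℝ × (Fin n → ℝ) => p.2 k) from (measurable_pi_apply k).comp (measurable_snd : Measurable (fun p : ℝ × (Fin n → ℝ) => p.2)))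

lemma mp_upd (i : Fin n) :
    MeasurePreserving (fun p : ℝ × (Fin n → ℝ) => Function.update p.2 i p.1)
      ((B i).prod (Measure.pi B)) (Measure.pi B) := by
  refine ⟨meas_upd i, ?_⟩
  refine (Measure.pi_eq fun s hs => ?_).symm
  rw [Measure.map_apply (meas_upd i) (MeasurableSet.univ_pi hs)]
  have hpre : (fun p : ℝ × (Fin n → ℝ) => Function.update p.2 i p.1) ⁻¹'
      (Set.pi Set.univ s) = (s i) ×ˢ (Set.pi Set.univ (Function.update s i Set.univ)) := by
    ext p
    simp only [Set.mem_preimage, Set.mem_pi, Set.mem_univ, forall_true_left, Set.mem_prod]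
    constructor
    · intro h
      refine ⟨by simpa using h i, fun k => ?_⟩
      by_cases hk : k = i
      · subst hk; simp
      · simpa [Function.update_apply, hk] using h k
    · rintro ⟨h1, h2⟩ k
      by_cases hk : k = i
      · subst hk; simpa using h1
      · have := h2 k; simpa [Function.update_apply, hk] using this
  rw [hpre, Measure.prod_prod, Measure.pi_pi]
  have : (fun k => (B k) (Function.update s i Set.univ k)) =
      Function.update (fun k => (B k) (s k)) i ((B i) Set.univ) := by
    funext k
    by_cases hk : k = i
    · subst hk; simp
    · simp [Function.update_apply, hk]
  rw [this, Finset.prod_update_of_mem (Finset.mem_univ i)]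
  rw [Finset.prod_eq_mul_prod_sdiff_singleton_of_mem (Finset.mem_univ i) (fun k => (B k) (s k))]
  simp [← mul_assoc, mul_comm]

end

section
variable {n : ℕ} (B : Fin n → Measure ℝ) [∀ i, IsProbabilityMeasure (B i)]

lemma meas_upd2 (i : Fin n) (x : ℝ) :
    Measurable (fun b : Fin n → ℝ => Function.update b i x) :=
  (meas_upd i).comp (measurable_const.prodMk measurable_id)

lemma fub_int (i : Fin n) {f : (Fin n → ℝ) → ℝ} (hf : Integrable f (Measure.pi B)) :
    Integrable (fun p : ℝ × (Fin n → ℝ) => f (Function.update p.2 i p.1))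
      ((B i).prod (Measure.pi B)) :=
  ((mp_upd B i).integrable_comp hf.aestronglyMeasurable).mpr hf

lemma fub (i : Fin n) {f : (Fin n → ℝ) → ℝ} (hf : Integrable f (Measure.pi B)) :
    ∫ b, f b ∂(Measure.pi B)
      = ∫ x, ∫ b, f (Function.update b i x) ∂(Measure.pi B) ∂(B i) := by
  conv_lhs => rw [← (mp_upd B i).map_eq]
  rw [integral_map (meas_upd i).aemeasurable]
  · exact integral_prod _ (fub_int B i hf)
  · rw [(mp_upd B i).map_eq]; exact hf.aestronglyMeasurable

lemma fub_marg (i : Fin n) {f : (Fin n → ℝ) → ℝ} (hf : Integrable f (Measure.pi B)) :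
    Integrable (fun x => ∫ b, f (Function.update b i x) ∂(Measure.pi B)) (B i) :=
  (fub_int B i hf).integral_prod_left

lemma fub_ae_zero (i : Fin n) {f : (Fin n → ℝ) → ℝ} (hf : Integrable f (Measure.pi B))
    (h0 : ∀ b, 0 ≤ f b) (hz : ∫ b, f b ∂(Measure.pi B) = 0) :
    ∀ᵐ x ∂(B i), ∫ b, f (Function.update b i x) ∂(Measure.pi B) = 0 := by
  have hint := fub_marg B i hf
  have hnn : 0 ≤ᵐ[B i] fun x => ∫ b, f (Function.update b i x) ∂(Measure.pi B) :=
    Filter.Eventually.of_forall fun x => integral_nonneg fun b => h0 _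
  have : ∫ x, (∫ b, f (Function.update b i x) ∂(Measure.pi B)) ∂(B i) = 0 := by
    rw [← fub B i hf]; exact hz
  exact (integral_eq_zero_iff_of_nonneg_ae hnn hint).mp this

lemma int_bdd {g : (Fin n → ℝ) → ℝ} (hg : Measurable g) (C : ℝ) (h : ∀ b, |g b| ≤ C) :
    Integrable g (Measure.pi B) :=
  Integrable.mono' (integrable_const C) hg.aestronglyMeasurable
    (Filter.Eventually.of_forall fun b => by simpa [Real.norm_eq_abs] using h b)

end

section
variable {n : ℕ} (B : Fin n → Measure ℝ) [∀ i, IsProbabilityMeasure (B i)]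

lemma pi_coord (k : Fin n) (s : Set ℝ) :
    Measure.pi B {b | b k ∈ s} = B k s := by
  have hset : {b : Fin n → ℝ | b k ∈ s}
      = Set.pi Set.univ (Function.update (fun _ => (Set.univ : Set ℝ)) k s) := by
    ext b
    simp only [Set.mem_setOf_eq, Set.mem_pi, Set.mem_univ, forall_true_left]
    constructor
    · intro h j
      by_cases hj : j = k
      · subst hj; simpa using h
      · simp [Function.update_apply, hj]
    · intro h
      have := h k; simpa using this
  rw [hset, Measure.pi_pi]
  have : (fun j => (B j) (Function.update (fun _ => (Set.univ : Set ℝ)) k s j)) =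
      Function.update (fun j => (B j) (Set.univ : Set ℝ)) k ((B k) s) := by
    funext j
    by_cases hj : j = k
    · subst hj; simp
    · simp [Function.update_apply, hj]
  rw [this, Finset.prod_update_of_mem (Finset.mem_univ k)]
  simp

end



section
variable (B : Fin n → Measure ℝ) [∀ i, IsProbabilityMeasure (B i)]
  (τ : (Fin n → ℝ) → Fin n → ℝ)







noncomputable def wf (i : Fin n) (x : ℝ) : ℝ :=
  ∫ b, τ (Function.update b i x) i ∂(Measure.pi B)
noncomputable def Psi (i : Fin n) (x : ℝ) : ℝ := ((Measure.pi B) (Eset (n := n) i x)).toReal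

variable (hτ_nonneg : ∀ b i, 0 ≤ τ b i) (hτ_sum : ∀ b, ∑ i, τ b i = 1)
  (hτ_max : ∀ b (i : Fin n), (∃ k, b i < b k) → τ b i = 0)
  (hτ_meas : ∀ i, Measurable fun b => τ b i)

include hτ_nonneg hτ_sum in
lemma tau_le_one (b : Fin n → ℝ) (i : Fin n) : τ b i ≤ 1 := by
  rw [← hτ_sum b]
  exact Finset.single_le_sum (fun k _ => hτ_nonneg b k) (Finset.mem_univ i)

include hτ_nonneg hτ_sum in
lemma int_tau_mul (j : Fin n) {g : (Fin n → ℝ) → ℝ} (hg : Measurable g)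
    (hgm : Measurable fun b => τ b j) (hb : ∀ b, |g b| ≤ 1) :
    Integrable (fun b => τ b j * g b) (Measure.pi B) := by
  refine int_bdd B (hgm.mul hg) 1 fun b => ?_
  rw [abs_mul]
  have h1 := abs_of_nonneg (hτ_nonneg b j)
  nlinarith [tau_le_one τ hτ_nonneg hτ_sum b j, hb b, abs_nonneg (g b), hτ_nonneg b j]

include hτ_meas in
lemma int_tau_upd (i j : Fin n) (x : ℝ) (hτ_nonneg : ∀ b i, 0 ≤ τ b i)
    (hτ_sum : ∀ b, ∑ i, τ b i = 1) :
    Integrable (fun b => τ (Function.update b i x) j) (Measure.pi B) := by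
  refine int_bdd B ((hτ_meas j).comp (meas_upd2 i x)) 1 fun b => ?_
  rw [abs_of_nonneg (hτ_nonneg _ j)]
  exact tau_le_one τ hτ_nonneg hτ_sum _ j

lemma int_ind (s : Set (Fin n → ℝ)) (hs : MeasurableSet s) :
    Integrable (s.indicator (fun _ => (1:ℝ))) (Measure.pi B) := by
  refine int_bdd B (measurable_const.indicator hs) 1 fun b => ?_
  by_cases h : b ∈ s <;> simp [Set.indicator_apply, h]

lemma ind_int_eq (s : Set (Fin n → ℝ)) (hs : MeasurableSet s) :
    ∫ b, s.indicator (fun _ => (1:ℝ)) b ∂(Measure.pi B) = ((Measure.pi B) s).toReal := by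
  exact integral_indicator_one (μ := Measure.pi B) hs

include hτ_nonneg hτ_sum hτ_max hτ_meas in
lemma wf_le_Psi (i : Fin n) (x : ℝ) : wf B τ i x ≤ Psi B i x := by
  rw [wf, Psi, ← ind_int_eq B _ (meas_Eset i x)]
  refine integral_mono (int_tau_upd B τ hτ_meas i i x hτ_nonneg hτ_sum)
    (int_ind B _ (meas_Eset i x)) fun b => ?_
  by_cases h : b ∈ Eset (n := n) i x
  · simp only [Set.indicator_of_mem h]
    exact tau_le_one τ hτ_nonneg hτ_sum _ i
  · simp only [Set.indicator_of_notMem h]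
    obtain ⟨k, hk, hkx⟩ : ∃ k, k ≠ i ∧ x < b k := by
      by_contra hc; push_neg at hc; exact h fun k hk => (hc k hk)
    have : τ (Function.update b i x) i = 0 := by
      refine hτ_max _ i ⟨k, ?_⟩
      rw [Function.update_self, Function.update_of_ne hk]; exact hkx
    simp [this]

include hτ_nonneg hτ_sum hτ_max hτ_meas in
lemma Lset_le_wf (i : Fin n) (x : ℝ) :
    ((Measure.pi B) (Lset (n := n) i x)).toReal ≤ wf B τ i x := by
  rw [wf, ← ind_int_eq B _ (meas_Lset i x)]
  refine integral_mono (int_ind B _ (meas_Lset i x))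
    (int_tau_upd B τ hτ_meas i i x hτ_nonneg hτ_sum) fun b => ?_
  by_cases h : b ∈ Lset (n := n) i x
  · simp only [Set.indicator_of_mem h]
    have hz : ∀ k, k ≠ i → τ (Function.update b i x) k = 0 := by
      intro k hk
      refine hτ_max _ k ⟨i, ?_⟩
      rw [Function.update_self, Function.update_of_ne hk]; exact h k hk
    have := hτ_sum (Function.update b i x)
    rw [Finset.sum_eq_single i (fun k _ hk => hz k hk) (by simp)] at this
    rw [this]
  · simp only [Set.indicator_of_notMem h]
    exact hτ_nonneg _ i

include hτ_nonneg hτ_sum hτ_max hτ_meas in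
lemma wf_le_coord (i : Fin n) (x : ℝ) (k : Fin n) (hk : k ≠ i) :
    wf B τ i x ≤ (B k (Set.Iic x)).toReal := by
  rw [wf, ← pi_coord B k (Set.Iic x), ← ind_int_eq B {b | b k ∈ Set.Iic x}
    ((measurable_pi_apply k) measurableSet_Iic)]
  refine integral_mono (int_tau_upd B τ hτ_meas i i x hτ_nonneg hτ_sum)
    (int_ind B _ ((measurable_pi_apply k) measurableSet_Iic)) fun b => ?_
  by_cases h : b k ≤ x
  · have : b ∈ {b : Fin n → ℝ | b k ∈ Set.Iic x} := h
    simp only [Set.indicator_of_mem this]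
    exact tau_le_one τ hτ_nonneg hτ_sum _ i
  · have : b ∉ {b : Fin n → ℝ | b k ∈ Set.Iic x} := h
    simp only [Set.indicator_of_notMem this]
    have : τ (Function.update b i x) i = 0 := by
      refine hτ_max _ i ⟨k, ?_⟩
      rw [Function.update_self, Function.update_of_ne hk]
      exact lt_of_not_ge h
    simp [this]

include hτ_nonneg in
lemma wf_nonneg (i : Fin n) (x : ℝ) : 0 ≤ wf B τ i x :=
  integral_nonneg fun b => hτ_nonneg _ i

lemma Psi_nonneg (i : Fin n) (x : ℝ) : 0 ≤ Psi B i x := ENNReal.toReal_nonneg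

lemma Psi_le_one (i : Fin n) (x : ℝ) : Psi B i x ≤ 1 := by
  rw [Psi]
  have h := ENNReal.toReal_mono (measure_ne_top (Measure.pi B) Set.univ)
    (measure_mono (Set.subset_univ (Eset (n := n) i x)))
  simpa using h

end


end Stmt6



open Stmt6

/-- Every mixed Nash equilibrium of a single-item first-price auction (any
valuations `vᵢ ≥ 0`, any tie-breaking rule) is fully efficient: the expected social welfare
equals `maxᵢ vᵢ`.  That is, the mixed price of anarchy of such auctions is `1`. -/
theorem stmt_6
    (n : ℕ) (hn : 0 < n)
    (v : Fin n → ℝ) (hv : ∀ i, 0 ≤ v i)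
    -- the tie-breaking rule: a measurable probability vector supported on the highest bidders
    (τ : (Fin n → ℝ) → Fin n → ℝ)
    (hτ_meas : ∀ i, Measurable fun b => τ b i)
    (hτ_nonneg : ∀ b i, 0 ≤ τ b i)
    (hτ_sum : ∀ b, ∑ i, τ b i = 1)
    (hτ_max : ∀ b i, (∃ k, b i < b k) → τ b i = 0)
    -- utilities
    (u : Fin n → (Fin n → ℝ) → ℝ)
    (hu : ∀ i b, u i b = τ b i * (v i - b i))
    -- the mixed strategy profile: independent bids, supported on `[0, ∞)`
    (B : Fin n → Measure ℝ)
    [∀ i, IsProbabilityMeasure (B i)]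
    (hB_supp : ∀ i, B i (Set.Iio 0) = 0)
    -- all relevant expectations exist
    (hInt : ∀ i, Integrable (u i) (Measure.pi B))
    (hIntDev : ∀ i (a : ℝ),
      Integrable (fun b => u i (Function.update b i a)) (Measure.pi B))
    -- the Nash equilibrium condition
    (hNash : ∀ i (a : ℝ), 0 ≤ a →
      (∫ b, u i b ∂(Measure.pi B)) ≥ ∫ b, u i (Function.update b i a) ∂(Measure.pi B)) :
    (∫ b, (∑ i, τ b i * v i) ∂(Measure.pi B)) = ⨆ i, v i := by
  classical
  have hne : Nonempty (Fin n) := ⟨⟨0, hn⟩⟩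
  obtain ⟨istar, histar⟩ : ∃ i : Fin n, ∀ k, v k ≤ v i := Finite.exists_max v
  have hsup : (⨆ i, v i) = v istar :=
    le_antisymm (ciSup_le fun i => histar i)
      (le_ciSup (Set.Finite.bddAbove (Set.finite_range v)) istar)
  rw [hsup]
  set M := v istar with hMdef
  -- measurability of utilities
  have hu_meas : ∀ i, Measurable (u i) := by
    intro i
    have : u i = fun b => τ b i * (v i - b i) := funext fun b => hu i b
    rw [this]
    exact (hτ_meas i).mul (measurable_const.sub (measurable_pi_apply i))
  -- deviation payoff formula
  have hW : ∀ (i : Fin n) (x : ℝ),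
      (∫ b, u i (Function.update b i x) ∂(Measure.pi B)) = (v i - x) * wf B τ i x := by
    intro i x
    have hpt : ∀ b : Fin n → ℝ,
        u i (Function.update b i x) = τ (Function.update b i x) i * (v i - x) := by
      intro b; rw [hu, Function.update_self]
    calc (∫ b, u i (Function.update b i x) ∂(Measure.pi B))
        = ∫ b, τ (Function.update b i x) i * (v i - x) ∂(Measure.pi B) :=
          integral_congr_ae (Filter.Eventually.of_forall hpt)
      _ = (∫ b, τ (Function.update b i x) i ∂(Measure.pi B)) * (v i - x) :=
          integral_mul_const _ _
      _ = (v i - x) * wf B τ i x := by rw [wf]; ring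
  -- Nash inequality in w-form
  have hdev : ∀ (i : Fin n) (x : ℝ), 0 ≤ x →
      (v i - x) * wf B τ i x ≤ ∫ b, u i b ∂(Measure.pi B) := by
    intro i x hx
    rw [← hW i x]
    exact hNash i x hx
  -- nonnegative equilibrium utilities
  have hU0 : ∀ i, 0 ≤ ∫ b, u i b ∂(Measure.pi B) := by
    intro i
    have h := hdev i 0 le_rfl
    have := wf_nonneg B τ hτ_nonneg i 0
    nlinarith [hv i]
  -- a.e. best response
  have hBR : ∀ i, ∀ᵐ x ∂(B i),
      0 ≤ x ∧ (v i - x) * wf B τ i x = ∫ b, u i b ∂(Measure.pi B) := by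
    intro i
    have hxpos : ∀ᵐ x ∂(B i), 0 ≤ x := by
      rw [ae_iff]
      convert hB_supp i using 2
      ext x; simp [not_le]
    have hint : Integrable
        (fun x => ∫ b, u i (Function.update b i x) ∂(Measure.pi B)) (B i) :=
      fub_marg B i (hInt i)
    have heq : ∫ x, (∫ b, u i (Function.update b i x) ∂(Measure.pi B)) ∂(B i)
        = ∫ b, u i b ∂(Measure.pi B) := (fub B i (hInt i)).symm
    have hle : ∀ᵐ x ∂(B i), (∫ b, u i (Function.update b i x) ∂(Measure.pi B))
        ≤ ∫ b, u i b ∂(Measure.pi B) := hxpos.mono fun x hx => hNash i x hx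
    have hz : ∫ x, ((∫ b, u i b ∂(Measure.pi B))
        - (∫ b, u i (Function.update b i x) ∂(Measure.pi B))) ∂(B i) = 0 := by
      rw [integral_sub (integrable_const _) hint, heq]
      simp
    have hae := (integral_eq_zero_iff_of_nonneg_ae
      (hle.mono fun x h => sub_nonneg.mpr h) ((integrable_const _).sub hint)).mp hz
    filter_upwards [hxpos, hae] with x h1 h2
    refine ⟨h1, ?_⟩
    rw [← hW i x]
    have h2' : (∫ b, u i b ∂(Measure.pi B))
        - (∫ b, u i (Function.update b i x) ∂(Measure.pi B)) = 0 := h2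
    linarith
  -- overcutting bound for the max player
  have hover : ∀ x, 0 ≤ x → x < M →
      (M - x) * Psi B istar x ≤ ∫ b, u istar b ∂(Measure.pi B) := by
    intro x hx0 hxM
    have hstep : ∀ ε : ℝ, 0 < ε → ε < M - x →
        (M - x - ε) * Psi B istar x ≤ ∫ b, u istar b ∂(Measure.pi B) := by
      intro ε hε hεM
      have hsub : Eset (n := n) istar x ⊆ Lset (n := n) istar (x + ε) := by
        intro b hb k hk
        exact lt_of_le_of_lt (hb k hk) (by linarith)
      have h1 : Psi B istar x ≤ ((Measure.pi B) (Lset (n := n) istar (x + ε))).toReal :=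
        ENNReal.toReal_mono (measure_ne_top _ _) (measure_mono hsub)
      have h2 := Lset_le_wf B τ hτ_nonneg hτ_sum hτ_max hτ_meas istar (x + ε)
      have h3 := hdev istar (x + ε) (by linarith)
      have h4 : 0 < M - x - ε := by linarith
      have h5 := Psi_nonneg B istar x
      nlinarith [wf_nonneg B τ hτ_nonneg istar (x + ε)]
    refine le_of_forall_pos_le_add fun ε hε => ?_
    have hδ1 : 0 < min ε ((M - x)/2) := lt_min hε (by linarith)
    have hδ2 : min ε ((M - x)/2) < M - x := lt_of_le_of_lt (min_le_right _ _) (by linarith)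
    have := hstep _ hδ1 hδ2
    have h5 := Psi_nonneg B istar x
    have h6 := Psi_le_one B istar x
    nlinarith [min_le_left ε ((M - x)/2), min_le_right ε ((M - x)/2)]
  -- MAIN CLAIM
  have key : ∀ j, v j < M → (∫ b, τ b j ∂(Measure.pi B)) = 0 := by
    intro j hj
    have hji : j ≠ istar := fun h => by rw [h] at hj; exact lt_irrefl _ hj
    by_contra hne0
    have hq : 0 < ∫ b, τ b j ∂(Measure.pi B) :=
      lt_of_le_of_ne (integral_nonneg fun b => hτ_nonneg b j) (Ne.symm hne0)
    have hτle1 : ∀ b : Fin n → ℝ, τ b j ≤ 1 := fun b => tau_le_one τ hτ_nonneg hτ_sum b j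
    have hτj_int : Integrable (fun b => τ b j) (Measure.pi B) :=
      int_bdd B (hτ_meas j) 1 (fun b => by
        rw [abs_of_nonneg (hτ_nonneg b j)]; exact hτle1 b)
    have hMnn : 0 ≤ M := hv istar
    rcases eq_or_lt_of_le (hU0 istar) with hUeq | hUpos
    · -- Case A : the max player's equilibrium utility is zero
      have hPsi0 : ∀ x, 0 ≤ x → x < M → (Measure.pi B) (Eset (n := n) istar x) = 0 := by
        intro x h0 hM'
        have h1 := hover x h0 hM'
        rw [← hUeq] at h1
        have h2 := Psi_nonneg B istar x
        have h3 : Psi B istar x = 0 := by nlinarith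
        exact ((ENNReal.toReal_eq_zero_iff _).mp h3).resolve_right (measure_ne_top _ _)
      set mid := (v j + M)/2 with hmiddef
      have hvj0 := hv j
      have hmid0 : 0 ≤ mid := by rw [hmiddef]; linarith
      have hmidM : mid < M := by rw [hmiddef]; linarith
      have hvjmid : v j < mid := by rw [hmiddef]; linarith
      have hm1 : MeasurableSet {c : Fin n → ℝ | c j ≤ v j} :=
        measurableSet_le (measurable_pi_apply j) measurable_const
      have hint1 : Integrable (fun b => τ b j *
          Set.indicator {c : Fin n → ℝ | c j ≤ v j} (fun _ => (1:ℝ)) b) (Measure.pi B) := by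
        refine int_tau_mul B τ hτ_nonneg hτ_sum j (measurable_const.indicator hm1)
          (hτ_meas j) fun b => ?_
        by_cases h : b ∈ {c : Fin n → ℝ | c j ≤ v j} <;> simp [Set.indicator_apply, h]
      have hpart1 : ∫ b, τ b j *
          Set.indicator {c : Fin n → ℝ | c j ≤ v j} (fun _ => (1:ℝ)) b ∂(Measure.pi B) = 0 := by
        refine le_antisymm ?_ (integral_nonneg fun b => mul_nonneg (hτ_nonneg b j)
          (Set.indicator_nonneg (fun _ _ => zero_le_one) b))
        have hptw : ∀ b : Fin n → ℝ, τ b j *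
            Set.indicator {c : Fin n → ℝ | c j ≤ v j} (fun _ => (1:ℝ)) b
            ≤ Set.indicator (Eset (n := n) istar mid) (fun _ => (1:ℝ)) b := by
          intro b
          by_cases hbj : b j ≤ v j
          · by_cases hτ0 : τ b j = 0
            · rw [hτ0, zero_mul]
              exact Set.indicator_nonneg (fun _ _ => zero_le_one) b
            · have hmax : ∀ k, b k ≤ b j := by
                intro k
                by_contra hlt
                exact hτ0 (hτ_max b j ⟨k, lt_of_not_ge hlt⟩)
              have hbE : b ∈ Eset (n := n) istar mid := by
                intro k _
                exact le_trans (le_trans (hmax k) hbj) (le_of_lt hvjmid)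
              rw [Set.indicator_of_mem hbE]
              by_cases h : b ∈ {c : Fin n → ℝ | c j ≤ v j}
              · rw [Set.indicator_of_mem h]
                nlinarith [hτle1 b, hτ_nonneg b j]
              · rw [Set.indicator_of_notMem h, mul_zero]; exact zero_le_one
          · have : b ∉ {c : Fin n → ℝ | c j ≤ v j} := hbj
            rw [Set.indicator_of_notMem this, mul_zero]
            exact Set.indicator_nonneg (fun _ _ => zero_le_one) b
        calc ∫ b, τ b j *
            Set.indicator {c : Fin n → ℝ | c j ≤ v j} (fun _ => (1:ℝ)) b ∂(Measure.pi B)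
            ≤ ∫ b, Set.indicator (Eset (n := n) istar mid) (fun _ => (1:ℝ)) b ∂(Measure.pi B) :=
              integral_mono hint1 (int_ind B _ (meas_Eset istar mid)) hptw
          _ = 0 := by
              rw [ind_int_eq B _ (meas_Eset istar mid), hPsi0 mid hmid0 hmidM]; simp
      have hwj_hi : ∀ᵐ x ∂(B j), v j < x → wf B τ j x = 0 := by
        filter_upwards [hBR j] with x hx hxgt
        obtain ⟨hx0, hxe⟩ := hx
        have h1 := wf_nonneg B τ hτ_nonneg j x
        have h2 := hU0 j
        nlinarith
      have hm2 : Measurable fun b : Fin n → ℝ =>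
          Set.indicator (Set.Ioi (v j)) (fun _ => (1:ℝ)) (b j) :=
        (measurable_const.indicator measurableSet_Ioi).comp (measurable_pi_apply j)
      have hint2' : Integrable (fun b => τ b j *
          Set.indicator (Set.Ioi (v j)) (fun _ => (1:ℝ)) (b j)) (Measure.pi B) := by
        refine int_tau_mul B τ hτ_nonneg hτ_sum j hm2 (hτ_meas j) fun b => ?_
        by_cases h : b j ∈ Set.Ioi (v j) <;> simp [Set.indicator_apply, h]
      have hpart2 : ∫ b, τ b j *
          Set.indicator (Set.Ioi (v j)) (fun _ => (1:ℝ)) (b j) ∂(Measure.pi B) = 0 := by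
        rw [fub B j hint2']
        refine integral_eq_zero_of_ae ?_
        filter_upwards [hwj_hi] with x hx
        simp only [Pi.zero_apply]
        have hptw : ∀ b : Fin n → ℝ,
            τ (Function.update b j x) j *
              Set.indicator (Set.Ioi (v j)) (fun _ => (1:ℝ)) ((Function.update b j x) j)
            = τ (Function.update b j x) j *
              Set.indicator (Set.Ioi (v j)) (fun _ => (1:ℝ)) x := by
          intro b; rw [Function.update_self]
        rw [integral_congr_ae (Filter.Eventually.of_forall hptw), integral_mul_const]
        by_cases h : x ∈ Set.Ioi (v j)
        · have hwfr : (∫ b, τ (Function.update b j x) j ∂(Measure.pi B)) = wf B τ j x := rfl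
          rw [hwfr, hx h, zero_mul]
        · rw [Set.indicator_of_notMem h, mul_zero]
      have hsplit : ∀ b : Fin n → ℝ, τ b j =
          τ b j * Set.indicator {c : Fin n → ℝ | c j ≤ v j} (fun _ => (1:ℝ)) b
          + τ b j * Set.indicator (Set.Ioi (v j)) (fun _ => (1:ℝ)) (b j) := by
        intro b
        by_cases h : b j ≤ v j
        · have h1 : b ∈ {c : Fin n → ℝ | c j ≤ v j} := h
          have h2 : b j ∉ Set.Ioi (v j) := by simp [not_lt.mpr h]
          rw [Set.indicator_of_mem h1, Set.indicator_of_notMem h2]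
          ring
        · have h1 : b ∉ {c : Fin n → ℝ | c j ≤ v j} := h
          have h2 : b j ∈ Set.Ioi (v j) := lt_of_not_ge h
          rw [Set.indicator_of_notMem h1, Set.indicator_of_mem h2]
          ring
      have : (∫ b, τ b j ∂(Measure.pi B)) = 0 := by
        rw [integral_congr_ae (Filter.Eventually.of_forall hsplit),
          integral_add hint1 hint2', hpart1, hpart2]
        ring
      rw [this] at hq
      exact lt_irrefl _ hq
    · -- Case B : positive equilibrium utility for the max player
      have hae : ∀ᵐ x ∂(B istar), 0 ≤ x ∧ x < M ∧ wf B τ istar x = Psi B istar x ∧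
          (M - x) * Psi B istar x = ∫ b, u istar b ∂(Measure.pi B) ∧ 0 < Psi B istar x := by
        filter_upwards [hBR istar] with x hx
        obtain ⟨hx0, hxe⟩ := hx
        rw [← hMdef] at hxe
        have hw0 := wf_nonneg B τ hτ_nonneg istar x
        have hwle := wf_le_Psi B τ hτ_nonneg hτ_sum hτ_max hτ_meas istar x
        have hxM : x < M := by
          by_contra hcon
          push_neg at hcon
          nlinarith
        have h2 := hover x hx0 hxM
        have hPsiw : Psi B istar x = wf B τ istar x := by nlinarith
        exact ⟨hx0, hxM, hPsiw.symm, by nlinarith, by nlinarith⟩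
      set T : Set (Fin n → ℝ) := {c | ∀ k, k ≠ istar → c k ≤ c istar} with hTdef
      have hTmeas : MeasurableSet T := by
        have : T = ⋂ k, ⋂ (_ : k ≠ istar), {c : Fin n → ℝ | c k ≤ c istar} := by
          ext c; simp [hTdef]
        rw [this]
        exact MeasurableSet.iInter fun k => MeasurableSet.iInter fun _ =>
          measurableSet_le (measurable_pi_apply k) (measurable_pi_apply istar)
      have hFnn : ∀ b : Fin n → ℝ,
          0 ≤ Set.indicator T (fun _ => (1:ℝ)) b * (1 - τ b istar) := fun b =>
        mul_nonneg (Set.indicator_nonneg (fun _ _ => zero_le_one) b)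
          (by linarith [tau_le_one τ hτ_nonneg hτ_sum b istar])
      have hFint : Integrable
          (fun b => Set.indicator T (fun _ => (1:ℝ)) b * (1 - τ b istar)) (Measure.pi B) := by
        refine int_bdd B
          ((measurable_const.indicator hTmeas).mul (measurable_const.sub (hτ_meas istar))) 1
          fun b => ?_
        rw [abs_of_nonneg (hFnn b)]
        by_cases hb : b ∈ T
        · rw [Set.indicator_of_mem hb]
          have := hτ_nonneg b istar
          nlinarith
        · rw [Set.indicator_of_notMem hb, zero_mul]
          exact zero_le_one
      have hFzero : ∫ b,
          Set.indicator T (fun _ => (1:ℝ)) b * (1 - τ b istar) ∂(Measure.pi B) = 0 := by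
        rw [fub B istar hFint]
        refine integral_eq_zero_of_ae ?_
        filter_upwards [hae] with x hx
        simp only [Pi.zero_apply]
        obtain ⟨hx0, hxM, hwPsi, hUx, hPsipos⟩ := hx
        have hptw : ∀ b : Fin n → ℝ,
            Set.indicator T (fun _ => (1:ℝ)) (Function.update b istar x)
              * (1 - τ (Function.update b istar x) istar) =
            Set.indicator (Eset (n := n) istar x) (fun _ => (1:ℝ)) b
              - τ (Function.update b istar x) istar := by
          intro b
          by_cases hbE : b ∈ Eset (n := n) istar x
          · have hT' : Function.update b istar x ∈ T := by
              intro k hk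
              rw [Function.update_self, Function.update_of_ne hk]
              exact hbE k hk
            rw [Set.indicator_of_mem hT', Set.indicator_of_mem hbE]
            ring
          · have hT' : Function.update b istar x ∉ T := by
              intro hc
              refine hbE fun k hk => ?_
              have := hc k hk
              rwa [Function.update_self, Function.update_of_ne hk] at this
            obtain ⟨k, hk, hgt⟩ : ∃ k, k ≠ istar ∧ x < b k := by
              by_contra hc; push_neg at hc; exact hbE fun k hk => hc k hk
            have hτ0 : τ (Function.update b istar x) istar = 0 := by
              refine hτ_max _ istar ⟨k, ?_⟩
              rw [Function.update_self, Function.update_of_ne hk]; exact hgt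
            rw [Set.indicator_of_notMem hT', Set.indicator_of_notMem hbE, hτ0]
            ring
        rw [integral_congr_ae (Filter.Eventually.of_forall hptw),
          integral_sub (int_ind B _ (meas_Eset istar x))
            (int_tau_upd B τ hτ_meas istar istar x hτ_nonneg hτ_sum),
          ind_int_eq B _ (meas_Eset istar x)]
        have hr : (∫ b, τ (Function.update b istar x) istar ∂(Measure.pi B)) = wf B τ istar x := rfl
        have hr2 : ((Measure.pi B) (Eset (n := n) istar x)).toReal = Psi B istar x := rfl
        rw [hr, hr2, hwPsi]
        ring
      have hFae : ∀ᵐ b ∂(Measure.pi B), b ∈ T → τ b istar = 1 := by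
        have hz := (integral_eq_zero_iff_of_nonneg hFnn hFint).mp hFzero
        filter_upwards [hz] with b hb hbT
        simp only [Pi.zero_apply] at hb
        rw [Set.indicator_of_mem hbT, one_mul] at hb
        linarith
      have htie : ∀ᵐ b ∂(Measure.pi B),
          τ b j * Set.indicator {c : Fin n → ℝ | c j ≤ c istar} (fun _ => (1:ℝ)) b = 0 := by
        filter_upwards [hFae] with b hb
        by_cases hτ0 : τ b j = 0
        · rw [hτ0, zero_mul]
        · by_cases hbj : b j ≤ b istar
          · have hmax : ∀ k, b k ≤ b j := fun k => by
              by_contra hlt; exact hτ0 (hτ_max b j ⟨k, lt_of_not_ge hlt⟩)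
            have h1 : τ b istar = 1 := hb (fun k _ => le_trans (hmax k) hbj)
            have hsum := hτ_sum b
            have h3 : ∑ i, τ b i = τ b j + ∑ i ∈ Finset.univ.erase j, τ b i :=
              (Finset.add_sum_erase _ _ (Finset.mem_univ j)).symm
            have h4 : τ b istar ≤ ∑ i ∈ Finset.univ.erase j, τ b i :=
              Finset.single_le_sum (fun k _ => hτ_nonneg b k)
                (Finset.mem_erase.mpr ⟨Ne.symm hji, Finset.mem_univ _⟩)
            have hτjpos : 0 < τ b j := lt_of_le_of_ne (hτ_nonneg b j) (Ne.symm hτ0)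
            exact absurd rfl (by intro _; linarith : ¬ (0:ℝ) = 0)
          · have : b ∉ {c : Fin n → ℝ | c j ≤ c istar} := hbj
            rw [Set.indicator_of_notMem this, mul_zero]
      have hm3 : MeasurableSet {c : Fin n → ℝ | c j ≤ c istar} :=
        measurableSet_le (measurable_pi_apply j) (measurable_pi_apply istar)
      have hint3 : Integrable (fun b => τ b j *
          Set.indicator {c : Fin n → ℝ | c j ≤ c istar} (fun _ => (1:ℝ)) b) (Measure.pi B) := by
        refine int_tau_mul B τ hτ_nonneg hτ_sum j (measurable_const.indicator hm3)
          (hτ_meas j) fun b => ?_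
        by_cases h : b ∈ {c : Fin n → ℝ | c j ≤ c istar} <;> simp [Set.indicator_apply, h]
      have hzero2 : ∫ b, τ b j *
          Set.indicator {c : Fin n → ℝ | c j ≤ c istar} (fun _ => (1:ℝ)) b ∂(Measure.pi B) = 0 :=
        integral_eq_zero_of_ae htie
      have hinner0 : ∀ᵐ x ∂(B j), ∫ b, τ (Function.update b j x) j *
          Set.indicator {c : Fin n → ℝ | c j ≤ c istar} (fun _ => (1:ℝ))
            (Function.update b j x) ∂(Measure.pi B) = 0 :=
        fub_ae_zero B j hint3 (fun b => mul_nonneg (hτ_nonneg b j)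
          (Set.indicator_nonneg (fun _ _ => zero_le_one) _)) hzero2
      rcases eq_or_lt_of_le (hU0 j) with hUj0 | hUjpos
      · -- Subcase: U_j = 0
        have hwj0 : ∀ᵐ x ∂(B j), 0 ≤ x ∧ (v j - x) * wf B τ j x = 0 := by
          filter_upwards [hBR j] with x hx
          exact ⟨hx.1, by rw [hx.2]; exact hUj0.symm⟩
        have hq_eq : (∫ b, τ b j ∂(Measure.pi B)) = ∫ x, wf B τ j x ∂(B j) :=
          fub B j hτj_int
        have hae0 : ∀ᵐ x ∂(B j), x ≠ v j → wf B τ j x = 0 := by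
          filter_upwards [hwj0] with x hx hxne
          have hvx : v j - x ≠ 0 := sub_ne_zero.mpr (Ne.symm hxne)
          exact (mul_eq_zero.mp hx.2).resolve_left hvx
        have hwfvj : 0 < wf B τ j (v j) := by
          rcases lt_or_eq_of_le (wf_nonneg B τ hτ_nonneg j (v j)) with h | h
          · exact h
          · exfalso
            have hallz : ∀ᵐ x ∂(B j), wf B τ j x = 0 := by
              filter_upwards [hae0] with x h1
              by_cases hx : x = v j
              · rw [hx, ← h]
              · exact h1 hx
            rw [hq_eq, integral_eq_zero_of_ae
              (hallz.mono fun x hx => by simpa using hx)] at hq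
            exact lt_irrefl _ hq
        have hml : ∀ x : ℝ, x < v j → (Measure.pi B) (Lset (n := n) j x) = 0 := by
          intro x hx
          by_cases hx0 : 0 ≤ x
          · have h1 := hdev j x hx0
            rw [← hUj0] at h1
            have h2 := Lset_le_wf B τ hτ_nonneg hτ_sum hτ_max hτ_meas j x
            have h3 := ENNReal.toReal_nonneg (a := (Measure.pi B) (Lset (n := n) j x))
            have h4 : ((Measure.pi B) (Lset (n := n) j x)).toReal = 0 := by
              nlinarith [wf_nonneg B τ hτ_nonneg j x]
            exact ((ENNReal.toReal_eq_zero_iff _).mp h4).resolve_right (measure_ne_top _ _)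
          · push_neg at hx0
            have hsub : Lset (n := n) j x ⊆ {b : Fin n → ℝ | b istar ∈ Set.Iio 0} := by
              intro b hb
              exact lt_trans (hb istar (fun h => hji h.symm)) hx0
            refine measure_mono_null hsub ?_
            rw [pi_coord B istar (Set.Iio 0)]
            exact hB_supp istar
        have hD : (Measure.pi B) {b : Fin n → ℝ | ∀ k, k ≠ j → b k < v j} = 0 := by
          have hsub : {b : Fin n → ℝ | ∀ k, k ≠ j → b k < v j} ⊆
              ⋃ m : ℕ, Lset (n := n) j (v j - 1/(m+1)) := by
            intro b hb
            have hne2 : (Finset.univ.erase j).Nonempty :=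
              ⟨istar, Finset.mem_erase.mpr ⟨Ne.symm hji, Finset.mem_univ _⟩⟩
            have hne3 : ((Finset.univ.erase j).image b).Nonempty := hne2.image b
            obtain ⟨k0, hk0mem, hk0⟩ := Finset.mem_image.mp (Finset.max'_mem _ hne3)
            have hcv : ((Finset.univ.erase j).image b).max' hne3 < v j := by
              rw [← hk0]; exact hb k0 (Finset.mem_erase.mp hk0mem).1
            obtain ⟨m, hm⟩ := exists_nat_one_div_lt
              (show (0:ℝ) < v j - ((Finset.univ.erase j).image b).max' hne3 by linarith)
            refine Set.mem_iUnion.mpr ⟨m, fun k hk => ?_⟩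
            have hbk : b k ≤ ((Finset.univ.erase j).image b).max' hne3 := Finset.le_max' _ _
              (Finset.mem_image_of_mem b (Finset.mem_erase.mpr ⟨hk, Finset.mem_univ _⟩))
            have hm' : (1:ℝ)/(m+1) < v j - ((Finset.univ.erase j).image b).max' hne3 := hm
            have : (m:ℝ) + 1 = ((m:ℕ):ℝ) + 1 := by norm_num
            linarith
          refine measure_mono_null hsub (measure_iUnion_null fun m => hml _ ?_)
          have : (0:ℝ) < 1/((m:ℝ)+1) := by positivity
          linarith
        have hm4 : Measurable fun b : Fin n → ℝ =>
            Set.indicator ({v j}ᶜ : Set ℝ) (fun _ => (1:ℝ)) (b j) :=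
          (measurable_const.indicator (measurableSet_singleton (v j)).compl).comp
            (measurable_pi_apply j)
        have hint4 : Integrable (fun b => τ b j *
            Set.indicator ({v j}ᶜ : Set ℝ) (fun _ => (1:ℝ)) (b j)) (Measure.pi B) := by
          refine int_tau_mul B τ hτ_nonneg hτ_sum j hm4 (hτ_meas j) fun b => ?_
          by_cases h : b j ∈ ({v j}ᶜ : Set ℝ) <;> simp [Set.indicator_apply, h]
        have hz4 : ∫ b, τ b j *
            Set.indicator ({v j}ᶜ : Set ℝ) (fun _ => (1:ℝ)) (b j) ∂(Measure.pi B) = 0 := by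
          rw [fub B j hint4]
          refine integral_eq_zero_of_ae ?_
          filter_upwards [hae0] with x hx
          simp only [Pi.zero_apply]
          have hptw : ∀ b : Fin n → ℝ,
              τ (Function.update b j x) j *
                Set.indicator ({v j}ᶜ : Set ℝ) (fun _ => (1:ℝ)) ((Function.update b j x) j)
              = τ (Function.update b j x) j *
                Set.indicator ({v j}ᶜ : Set ℝ) (fun _ => (1:ℝ)) x := by
            intro b; rw [Function.update_self]
          rw [integral_congr_ae (Filter.Eventually.of_forall hptw), integral_mul_const]
          by_cases hxv : x = v j
          · have : x ∉ ({v j}ᶜ : Set ℝ) := by simp [hxv]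
            rw [Set.indicator_of_notMem this, mul_zero]
          · have hwfr : (∫ b, τ (Function.update b j x) j ∂(Measure.pi B)) = wf B τ j x := rfl
            rw [hwfr, hx hxv, zero_mul]
        have hae4 : ∀ᵐ b ∂(Measure.pi B), τ b j *
            Set.indicator ({v j}ᶜ : Set ℝ) (fun _ => (1:ℝ)) (b j) = 0 := by
          have := (integral_eq_zero_iff_of_nonneg (fun b => mul_nonneg (hτ_nonneg b j)
            (Set.indicator_nonneg (fun _ _ => zero_le_one) _)) hint4).mp hz4
          filter_upwards [this] with b hb
          simpa using hb
        have hρ : B istar (Set.Iio (v j)) ≠ 0 := by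
          intro h0
          have hmio : MeasurableSet {c : Fin n → ℝ | c istar ∈ Set.Iio (v j)} :=
            (measurable_pi_apply istar) measurableSet_Iio
          have hptle : ∀ᵐ b ∂(Measure.pi B), τ b j ≤
              Set.indicator {c : Fin n → ℝ | c istar ∈ Set.Iio (v j)} (fun _ => (1:ℝ)) b := by
            filter_upwards [htie, hae4] with b h1 h2
            by_cases hτ0 : τ b j = 0
            · rw [hτ0]
              exact Set.indicator_nonneg (fun _ _ => zero_le_one) b
            · have hbj : b j = v j := by
                by_contra hne'
                have hmem : b j ∈ ({v j}ᶜ : Set ℝ) := by simpa using hne'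
                rw [Set.indicator_of_mem hmem, mul_one] at h2
                exact hτ0 h2
              have hlt : b istar < b j := by
                by_contra hge
                push_neg at hge
                have hmem : b ∈ {c : Fin n → ℝ | c j ≤ c istar} := hge
                rw [Set.indicator_of_mem hmem, mul_one] at h1
                exact hτ0 h1
              have hmem : b ∈ {c : Fin n → ℝ | c istar ∈ Set.Iio (v j)} := by
                have : b istar < v j := by rw [← hbj]; exact hlt
                exact this
              rw [Set.indicator_of_mem hmem]
              exact hτle1 b
          have hle2 := integral_mono_ae hτj_int (int_ind B _ hmio) hptle
          rw [ind_int_eq B _ hmio, pi_coord B istar (Set.Iio (v j)), h0] at hle2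
          simp at hle2
          linarith
        have hCnull : (Measure.pi B)
            {b : Fin n → ℝ | ∀ k, k ≠ istar → k ≠ j → b k < v j} = 0 := by
          classical
          set s : Fin n → Set ℝ := fun k => if k = j then Set.univ else Set.Iio (v j) with hsdef
          have hACsub : Set.pi Set.univ s ⊆ {b : Fin n → ℝ | ∀ k, k ≠ j → b k < v j} := by
            intro b hb k hk
            have := hb k (Set.mem_univ k)
            simpa [hsdef, hk] using this
          have hzero : (Measure.pi B) (Set.pi Set.univ s) = 0 :=
            measure_mono_null hACsub hD
          rw [Measure.pi_pi] at hzero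
          have hCeq : {b : Fin n → ℝ | ∀ k, k ≠ istar → k ≠ j → b k < v j}
              = Set.pi Set.univ (Function.update s istar Set.univ) := by
            ext b
            simp only [Set.mem_setOf_eq, Set.mem_pi, Set.mem_univ, forall_true_left]
            constructor
            · intro h k
              by_cases hki : k = istar
              · subst hki; simp
              · rw [Function.update_of_ne hki]
                by_cases hkj : k = j
                · simp [hsdef, hkj]
                · simp only [hsdef, hkj, if_false]
                  exact h k hki hkj
            · intro h k hki hkj
              have := h k
              rw [Function.update_of_ne hki] at this
              simpa [hsdef, hkj] using this
          rw [hCeq, Measure.pi_pi]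
          have hfun : (fun k => (B k) (s k)) =
              Function.update (fun k => (B k) ((Function.update s istar Set.univ) k))
                istar ((B istar) (Set.Iio (v j))) := by
            funext k
            by_cases hki : k = istar
            · rw [hki, Function.update_self]
              congr 1
              simp [hsdef, (Ne.symm hji : istar ≠ j)]
            · rw [Function.update_of_ne hki, Function.update_of_ne hki]
          have hprod1 : ∏ k, (B k) (s k) = (B istar) (Set.Iio (v j)) *
              ∏ k ∈ Finset.univ \ {istar},
                (B k) ((Function.update s istar Set.univ) k) := by
            rw [hfun, Finset.prod_update_of_mem (Finset.mem_univ istar)]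
          have hprod2 : ∏ k, (B k) ((Function.update s istar Set.univ) k) =
              ∏ k ∈ Finset.univ \ {istar},
                (B k) ((Function.update s istar Set.univ) k) := by
            rw [Finset.prod_eq_mul_prod_sdiff_singleton_of_mem (Finset.mem_univ istar)]
            simp
          rw [hprod2]
          rw [hprod1] at hzero
          exact (mul_eq_zero.mp hzero).resolve_left hρ
        obtain ⟨x, hx1, hx2⟩ : ∃ x, x < v j ∧ (0 ≤ x ∧ x < M ∧
            wf B τ istar x = Psi B istar x ∧
            (M - x) * Psi B istar x = ∫ b, u istar b ∂(Measure.pi B) ∧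
            0 < Psi B istar x) := by
          by_contra hc
          refine hρ (measure_mono_null (fun x hx => ?_) (ae_iff.mp hae))
          exact fun hgood => hc ⟨x, hx, hgood⟩
        obtain ⟨hx0, hxM, hwPsi, hUx, hPsipos⟩ := hx2
        have hsubE : Eset (n := n) istar x ⊆
            {b : Fin n → ℝ | ∀ k, k ≠ istar → k ≠ j → b k < v j} := by
          intro b hb k hki _
          exact lt_of_le_of_lt (hb k hki) hx1
        have hEnull : (Measure.pi B) (Eset (n := n) istar x) = 0 :=
          measure_mono_null hsubE hCnull
        have hPz : Psi B istar x = 0 := by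
          rw [Psi, hEnull]; simp
        linarith
      · -- Subcase: U_j > 0
        have hwjae : ∀ᵐ x ∂(B j), 0 ≤ x ∧ x < v j ∧
            (∫ b, u j b ∂(Measure.pi B)) / v j ≤ wf B τ j x := by
          filter_upwards [hBR j] with x hx
          obtain ⟨hx0, heq⟩ := hx
          have hwf0 := wf_nonneg B τ hτ_nonneg j x
          have hxv : x < v j := by nlinarith
          have hvj' : 0 < v j := lt_of_le_of_lt hx0 hxv
          refine ⟨hx0, hxv, ?_⟩
          rw [div_le_iff₀ hvj']
          nlinarith
        have hvj : 0 < v j := by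
          haveI : (ae (B j)).NeBot := ae_neBot.mpr (IsProbabilityMeasure.ne_zero (B j))
          obtain ⟨x, hx⟩ := hwjae.exists
          exact lt_of_le_of_lt hx.1 hx.2.1
        have hcpos : 0 < (∫ b, u j b ∂(Measure.pi B)) / v j := div_pos hUjpos hvj
        set c := (∫ b, u j b ∂(Measure.pi B)) / v j with hcdef
        have hs0ne : ∃ y : ℝ, B j (Set.Iic y) ≠ 0 := by
          by_contra hcon
          push_neg at hcon
          have huniv : B j Set.univ = 0 := by
            have hcover : (Set.univ : Set ℝ) ⊆ ⋃ m : ℕ, Set.Iic (m : ℝ) := fun y _ =>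
              Set.mem_iUnion.mpr ⟨⌈y⌉₊, Nat.le_ceil y⟩
            exact measure_mono_null hcover (measure_iUnion_null fun m => hcon m)
          simp at huniv
        obtain ⟨y0, hy0⟩ := hs0ne
        have hbdd : BddBelow {y : ℝ | B j (Set.Iic y) ≠ 0} := by
          refine ⟨0, fun y hy => ?_⟩
          by_contra hneg
          push_neg at hneg
          exact hy (measure_mono_null (Set.Iic_subset_Iio.mpr hneg) (hB_supp j))
        set x₀ := sInf {y : ℝ | B j (Set.Iic y) ≠ 0} with hx₀def
        have hx₀mem_le : ∀ y, B j (Set.Iic y) ≠ 0 → x₀ ≤ y := fun y hy => csInf_le hbdd hy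
        have hlow : B j (Set.Iio x₀) = 0 := by
          have hcover : Set.Iio x₀ ⊆ ⋃ m : ℕ, Set.Iic (x₀ - 1/(m+1)) := by
            intro y hy
            obtain ⟨m, hm⟩ := exists_nat_one_div_lt (show (0:ℝ) < x₀ - y from sub_pos.mpr hy)
            exact Set.mem_iUnion.mpr ⟨m, by simp only [Set.mem_Iic]; linarith [hm]⟩
          refine measure_mono_null hcover (measure_iUnion_null fun m => ?_)
          by_contra hcon
          have h1 := hx₀mem_le _ hcon
          have hp : (0:ℝ) < 1/((m:ℝ)+1) := by positivity
          linarith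
        have hupp : ∀ ε : ℝ, 0 < ε → B j (Set.Iic (x₀ + ε)) ≠ 0 := by
          intro ε hε
          obtain ⟨y, hymem, hylt⟩ := (csInf_lt_iff hbdd ⟨y0, hy0⟩).mp
            (show x₀ < x₀ + ε by linarith)
          exact fun hz => hymem (measure_mono_null (Set.Iic_subset_Iic.mpr hylt.le) hz)
        have hstepm : ∀ m : ℕ, ENNReal.ofReal c ≤ B istar (Set.Iic (x₀ + 1/(m+1))) := by
          intro m
          have hpm : (0:ℝ) < 1/((m:ℝ)+1) := by positivity
          obtain ⟨x, hxIic, hxg⟩ : ∃ x, x ∈ Set.Iic (x₀ + 1/(m+1)) ∧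
              (0 ≤ x ∧ x < v j ∧ c ≤ wf B τ j x) := by
            by_contra hcon
            refine hupp _ hpm (measure_mono_null (fun x hx => ?_) (ae_iff.mp hwjae))
            exact fun hgood => hcon ⟨x, hx, hgood⟩
          have h1 : c ≤ wf B τ j x := hxg.2.2
          have h2 := wf_le_coord B τ hτ_nonneg hτ_sum hτ_max hτ_meas j x istar
            (fun h => hji h.symm)
          have h3 : (B istar (Set.Iic x)).toReal ≤
              (B istar (Set.Iic (x₀ + 1/(m+1)))).toReal :=
            ENNReal.toReal_mono (measure_ne_top _ _)
              (measure_mono (Set.Iic_subset_Iic.mpr hxIic))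
          exact ENNReal.ofReal_le_of_le_toReal (by linarith)
        have hPc : ENNReal.ofReal c ≤ B istar (Set.Iic x₀) := by
          have hiInter : Set.Iic x₀ = ⋂ m : ℕ, Set.Iic (x₀ + 1/(m+1)) := by
            ext y
            simp only [Set.mem_Iic, Set.mem_iInter]
            constructor
            · intro h m
              have hp : (0:ℝ) < 1/((m:ℝ)+1) := by positivity
              linarith
            · intro h
              by_contra hcon
              push_neg at hcon
              obtain ⟨m, hm⟩ := exists_nat_one_div_lt (show (0:ℝ) < y - x₀ by linarith)
              have := h m
              linarith
          have hanti : Antitone fun m : ℕ => Set.Iic (x₀ + 1/(m+1)) := by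
            intro m1 m2 hm
            refine Set.Iic_subset_Iic.mpr ?_
            have h1 : ((m1:ℝ)+1) ≤ ((m2:ℝ)+1) := by
              have : (m1:ℝ) ≤ (m2:ℝ) := Nat.cast_le.mpr hm
              linarith
            have h2 : (0:ℝ) < (m1:ℝ)+1 := by positivity
            have := one_div_le_one_div_of_le h2 h1
            linarith
          rw [hiInter, hanti.measure_iInter
            (fun m => measurableSet_Iic.nullMeasurableSet) ⟨0, measure_ne_top _ _⟩]
          exact le_iInf hstepm
        have hαIic : B istar (Set.Iic x₀) ≠ 0 := by
          intro h0
          rw [h0] at hPc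
          exact absurd (le_antisymm hPc zero_le) (ENNReal.ofReal_pos.mpr hcpos).ne'
        have his_low : B istar (Set.Iio x₀) = 0 := by
          have hgood : ∀ᵐ x ∂(B istar), x₀ ≤ x := by
            filter_upwards [hae] with x hx
            obtain ⟨hx0, hxM, hwPsi, hUx, hPsipos⟩ := hx
            have hEne : (Measure.pi B) (Eset (n := n) istar x) ≠ 0 := by
              intro hzz
              rw [Psi, hzz] at hPsipos
              simp at hPsipos
            have hBjx : B j (Set.Iic x) ≠ 0 := by
              rw [← pi_coord B j (Set.Iic x)]
              exact fun hzz => hEne (measure_mono_null (fun b hb => hb j hji) hzz)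
            exact hx₀mem_le x hBjx
          rw [ae_iff] at hgood
          convert hgood using 2
          ext y; simp [not_le]
        have hIicsplit : Set.Iic x₀ ⊆ Set.Iio x₀ ∪ {x₀} := by
          intro y hy
          rcases lt_or_eq_of_le (Set.mem_Iic.mp hy) with h | h
          · exact Or.inl h
          · exact Or.inr (by simp [h])
        have hatom : B istar {x₀} ≠ 0 := fun h0 =>
          hαIic (measure_mono_null hIicsplit (measure_union_null his_low h0))
        have hx₀good : 0 ≤ x₀ ∧ x₀ < M ∧ wf B τ istar x₀ = Psi B istar x₀ ∧
            (M - x₀) * Psi B istar x₀ = ∫ b, u istar b ∂(Measure.pi B) ∧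
            0 < Psi B istar x₀ := by
          by_contra hcon
          refine hatom (measure_mono_null (fun y hy => ?_) (ae_iff.mp hae))
          simp only [Set.mem_singleton_iff] at hy
          subst hy
          exact hcon
        obtain ⟨hx₀0', hx₀M, hwPsi₀, hUx₀, hPsipos₀⟩ := hx₀good
        have hβ : B j {x₀} ≠ 0 := by
          have hEne : (Measure.pi B) (Eset (n := n) istar x₀) ≠ 0 := by
            intro hzz
            rw [Psi, hzz] at hPsipos₀
            simp at hPsipos₀
          have hBjx : B j (Set.Iic x₀) ≠ 0 := by
            rw [← pi_coord B j (Set.Iic x₀)]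
            exact fun hzz => hEne (measure_mono_null (fun b hb => hb j hji) hzz)
          intro h0
          exact hBjx (measure_mono_null hIicsplit (measure_union_null hlow h0))
        have hx₀jgood : 0 ≤ x₀ ∧ x₀ < v j ∧ c ≤ wf B τ j x₀ := by
          by_contra hcon
          refine hβ (measure_mono_null (fun y hy => ?_) (ae_iff.mp hwjae))
          simp only [Set.mem_singleton_iff] at hy
          subst hy
          exact hcon
        have hinn₀ : ∫ b, τ (Function.update b j x₀) j *
            Set.indicator {c : Fin n → ℝ | c j ≤ c istar} (fun _ => (1:ℝ))
              (Function.update b j x₀) ∂(Measure.pi B) = 0 := by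
          by_contra hcon
          refine hβ (measure_mono_null (fun y hy => ?_) (ae_iff.mp hinner0))
          simp only [Set.mem_singleton_iff] at hy
          subst hy
          exact hcon
        have hm5 : MeasurableSet {b : Fin n → ℝ | b istar ∈ Set.Iio x₀} :=
          (measurable_pi_apply istar) measurableSet_Iio
        have hτu_le1 : ∀ b : Fin n → ℝ, 0 ≤ τ (Function.update b j x₀) j ∧
            τ (Function.update b j x₀) j ≤ 1 := fun b =>
          ⟨hτ_nonneg _ j, tau_le_one τ hτ_nonneg hτ_sum _ j⟩
        have hint5 : Integrable (fun b => τ (Function.update b j x₀) j *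
            Set.indicator {b : Fin n → ℝ | b istar ∈ Set.Iio x₀}
              (fun _ => (1:ℝ)) b) (Measure.pi B) := by
          refine int_bdd B (((hτ_meas j).comp (meas_upd2 j x₀)).mul
            (measurable_const.indicator hm5)) 1 fun b => ?_
          rw [abs_mul, abs_of_nonneg (hτu_le1 b).1]
          by_cases h : b ∈ {b : Fin n → ℝ | b istar ∈ Set.Iio x₀}
          · rw [Set.indicator_of_mem h]
            simpa using (hτu_le1 b).2
          · rw [Set.indicator_of_notMem h]
            simp
        have hint6 : Integrable (fun b => τ (Function.update b j x₀) j *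
            Set.indicator {c : Fin n → ℝ | c j ≤ c istar} (fun _ => (1:ℝ))
              (Function.update b j x₀)) (Measure.pi B) := by
          have hmm : Measurable fun b : Fin n → ℝ =>
              Set.indicator {c : Fin n → ℝ | c j ≤ c istar} (fun _ => (1:ℝ))
                (Function.update b j x₀) :=
            (measurable_const.indicator hm3).comp (meas_upd2 j x₀)
          refine int_bdd B (((hτ_meas j).comp (meas_upd2 j x₀)).mul hmm) 1 fun b => ?_
          rw [abs_mul, abs_of_nonneg (hτu_le1 b).1]
          by_cases h : Function.update b j x₀ ∈ {c : Fin n → ℝ | c j ≤ c istar}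
          · rw [Set.indicator_of_mem h]
            simpa using (hτu_le1 b).2
          · rw [Set.indicator_of_notMem h]
            simp
        have hlowpart : ∫ b, τ (Function.update b j x₀) j *
            Set.indicator {b : Fin n → ℝ | b istar ∈ Set.Iio x₀}
              (fun _ => (1:ℝ)) b ∂(Measure.pi B) = 0 := by
          refine le_antisymm ?_ (integral_nonneg fun b => mul_nonneg (hτ_nonneg _ j)
            (Set.indicator_nonneg (fun _ _ => zero_le_one) b))
          have hptw : ∀ b : Fin n → ℝ, τ (Function.update b j x₀) j *
              Set.indicator {b : Fin n → ℝ | b istar ∈ Set.Iio x₀} (fun _ => (1:ℝ)) b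
              ≤ Set.indicator {b : Fin n → ℝ | b istar ∈ Set.Iio x₀} (fun _ => (1:ℝ)) b := by
            intro b
            by_cases h : b ∈ {b : Fin n → ℝ | b istar ∈ Set.Iio x₀}
            · rw [Set.indicator_of_mem h]
              simpa using (hτu_le1 b).2
            · rw [Set.indicator_of_notMem h]
              simp
          calc ∫ b, τ (Function.update b j x₀) j *
              Set.indicator {b : Fin n → ℝ | b istar ∈ Set.Iio x₀}
                (fun _ => (1:ℝ)) b ∂(Measure.pi B)
              ≤ ∫ b, Set.indicator {b : Fin n → ℝ | b istar ∈ Set.Iio x₀}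
                (fun _ => (1:ℝ)) b ∂(Measure.pi B) :=
                integral_mono hint5 (int_ind B _ hm5) hptw
            _ = 0 := by
                rw [ind_int_eq B _ hm5, pi_coord B istar (Set.Iio x₀), his_low]
                simp
        have hcomb : wf B τ j x₀ = 0 := by
          have hptw : ∀ b : Fin n → ℝ, τ (Function.update b j x₀) j =
              τ (Function.update b j x₀) j *
                Set.indicator {c : Fin n → ℝ | c j ≤ c istar} (fun _ => (1:ℝ))
                  (Function.update b j x₀)
              + τ (Function.update b j x₀) j *
                Set.indicator {b : Fin n → ℝ | b istar ∈ Set.Iio x₀} (fun _ => (1:ℝ)) b := by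
            intro b
            have hup_j : (Function.update b j x₀) j = x₀ := Function.update_self _ _ _
            have hup_i : (Function.update b j x₀) istar = b istar :=
              Function.update_of_ne (fun h => hji h.symm) _ _
            by_cases h : x₀ ≤ b istar
            · have h1 : Function.update b j x₀ ∈ {c : Fin n → ℝ | c j ≤ c istar} := by
                simp only [Set.mem_setOf_eq, hup_j, hup_i]
                exact h
              have h2 : b ∉ {b : Fin n → ℝ | b istar ∈ Set.Iio x₀} := by
                simp [Set.mem_setOf_eq, not_lt.mpr h]
              rw [Set.indicator_of_mem h1, Set.indicator_of_notMem h2]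
              ring
            · push_neg at h
              have h1 : Function.update b j x₀ ∉ {c : Fin n → ℝ | c j ≤ c istar} := by
                simp only [Set.mem_setOf_eq, hup_j, hup_i]
                exact not_le.mpr h
              have h2 : b ∈ {b : Fin n → ℝ | b istar ∈ Set.Iio x₀} := h
              rw [Set.indicator_of_notMem h1, Set.indicator_of_mem h2]
              ring
          have heq2 : wf B τ j x₀ = ∫ b, (τ (Function.update b j x₀) j *
              Set.indicator {c : Fin n → ℝ | c j ≤ c istar} (fun _ => (1:ℝ))
                (Function.update b j x₀)
              + τ (Function.update b j x₀) j *
                Set.indicator {b : Fin n → ℝ | b istar ∈ Set.Iio x₀}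
                  (fun _ => (1:ℝ)) b) ∂(Measure.pi B) :=
            integral_congr_ae (Filter.Eventually.of_forall hptw)
          rw [heq2, integral_add hint6 hint5, hinn₀, hlowpart]
          ring
        have hfin := hx₀jgood.2.2
        rw [hcomb] at hfin
        linarith
  -- final computation
  have hint2 : ∀ i : Fin n, Integrable (fun b => τ b i * (M - v i)) (Measure.pi B) := by
    intro i
    refine int_bdd B ((hτ_meas i).mul measurable_const) |M - v i| fun b => ?_
    rw [abs_mul, abs_of_nonneg (hτ_nonneg b i)]
    nlinarith [tau_le_one τ hτ_nonneg hτ_sum b i, hτ_nonneg b i, abs_nonneg (M - v i)]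
  have hterm : ∀ i : Fin n, (∫ b, τ b i * (M - v i) ∂(Measure.pi B)) = 0 := by
    intro i
    rw [integral_mul_const]
    rcases eq_or_lt_of_le (histar i) with h | h
    · rw [h]; simp
    · rw [key i h]; ring
  have hpt : ∀ b : Fin n → ℝ, ∑ i, τ b i * v i = M - ∑ i, τ b i * (M - v i) := by
    intro b
    have h1 : ∑ i, τ b i * (M - v i) = (∑ i, τ b i) * M - ∑ i, τ b i * v i := by
      rw [Finset.sum_mul, ← Finset.sum_sub_distrib]
      exact Finset.sum_congr rfl fun i _ => by ring
    rw [hτ_sum b] at h1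
    linarith
  calc (∫ b, ∑ i, τ b i * v i ∂(Measure.pi B))
      = ∫ b, (M - ∑ i, τ b i * (M - v i)) ∂(Measure.pi B) :=
        integral_congr_ae (Filter.Eventually.of_forall hpt)
    _ = M - ∫ b, ∑ i, τ b i * (M - v i) ∂(Measure.pi B) := by
        rw [integral_sub (integrable_const M)
          (integrable_finset_sum _ (fun i _ => hint2 i)), integral_const]
        simp
    _ = M := by
        rw [integral_finset_sum _ (fun i _ => hint2 i)]
        simp [hterm]
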